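/- arXiv:2006.01551 — 4 statements merged into one kernel-verified Lean document; each statement's English description precedes it below -/
import Mathlib

section
/- Let ω, Δt, ψ₁, ψ₂, M₁, M₂, ℓ be real numbers with ℓ > 0 and cos(ωΔt) ≠ 1, and let β ∈ ℂ. Let M be the 3×3 complex matrix with rows R1 = (1 − cos(βℓ), ψ₂(1 − cos(βℓ)), ψ₁(M₂cos(βℓ) + M₁)), R2 = (0, cos(ωΔt) − 1, (i/2)·sin(ωΔt)), R3 = (cos(ωΔt) − 1, 0, −(cos(ωΔt) + 1)/4). Then det M = 0 if and only if cos(βℓ)·(D₂ + F₁·i) = D₁ + F₁·i, where D₁ = −((cos(ωΔt)+1)/4 + ψ₁M₁(cos(ωΔt)−1)), D₂ = −(cos(ωΔt)+1)/4 + ψ₁M₂(cos(ωΔt)−1), and F₁ = ψ₂·sin(ωΔt)/2. -/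
open Complex Matrix

/-- For `cos(ωΔt) ≠ 1`, the determinant of the coefficient matrix of the
fully-discrete finite-element/Newmark system vanishes if and only if the
numerical dispersion relation `cos(βℓ)(D₂ + F₁i) = D₁ + F₁i` holds. -/
theorem discrete_system_det_eq_zero_iff
    (ω Δt ψ₁ ψ₂ M₁ M₂ ℓ : ℝ) (hℓ : 0 < ℓ) (hcos : Real.cos (ω * Δt) ≠ 1) (β : ℂ) :
    let M : Matrix (Fin 3) (Fin 3) ℂ :=
      Matrix.of
        ![![1 - Complex.cos (β * ℓ), (ψ₂ : ℂ) * (1 - Complex.cos (β * ℓ)),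
            (ψ₁ : ℂ) * ((M₂ : ℂ) * Complex.cos (β * ℓ) + (M₁ : ℂ))],
          ![0, (Real.cos (ω * Δt) : ℂ) - 1, (I / 2) * (Real.sin (ω * Δt) : ℂ)],
          ![(Real.cos (ω * Δt) : ℂ) - 1, 0, -((Real.cos (ω * Δt) : ℂ) + 1) / 4]]
    let D₁ : ℝ := -((Real.cos (ω * Δt) + 1) / 4 + ψ₁ * M₁ * (Real.cos (ω * Δt) - 1))
    let D₂ : ℝ := -(Real.cos (ω * Δt) + 1) / 4 + ψ₁ * M₂ * (Real.cos (ω * Δt) - 1)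
    let F₁ : ℝ := ψ₂ * Real.sin (ω * Δt) / 2
    M.det = 0 ↔
      Complex.cos (β * ℓ) * ((D₂ : ℂ) + (F₁ : ℂ) * I) = (D₁ : ℂ) + (F₁ : ℂ) * I := by
  intro M D₁ D₂ F₁
  have hc : ((Real.cos (ω * Δt) : ℂ) - 1) ≠ 0 := by
    intro h
    apply hcos
    have := sub_eq_zero.mp h
    exact_mod_cast this
  have hdet : M.det =
      -(((Real.cos (ω * Δt) : ℂ) - 1)) *
        (Complex.cos (β * ℓ) * ((D₂ : ℂ) + (F₁ : ℂ) * I) - ((D₁ : ℂ) + (F₁ : ℂ) * I)) := by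
    simp only [M, D₁, D₂, F₁, Matrix.det_fin_three, Matrix.of_apply, Matrix.cons_val',
      Matrix.cons_val_zero, Matrix.cons_val_one, Matrix.head_cons, Matrix.cons_val_two, Matrix.tail_cons]
    push_cast
    ring
  rw [hdet, mul_eq_zero, sub_eq_zero]
  exact or_iff_right (neg_ne_zero.mpr hc)
end

section
/- Let ω, Δt, ψ₁, ψ₂, M₁, M₂, ℓ be real numbers with ℓ > 0 and cos(ωΔt) ≠ −1, and let β ∈ ℂ satisfy cos(βℓ)·(D₂ + F₁·i) = D₁ + F₁·i, where D₁ = −((cos(ωΔt)+1)/4 + ψ₁M₁(cos(ωΔt)−1)), D₂ = −(cos(ωΔt)+1)/4 + ψ₁M₂(cos(ωΔt)−1), F₁ = ψ₂·sin(ωΔt)/2. Let M be the 3×3 complex matrix with rows R1 = (1 − cos(βℓ), ψ₂(1 − cos(βℓ)), ψ₁(M₂cos(βℓ) + M₁)), R2 = (0, cos(ωΔt) − 1, (i/2)·sin(ωΔt)), R3 = (cos(ωΔt) − 1, 0, −(cos(ωΔt) + 1)/4). Then the vector (1, −2i·sin(ωΔt)/(cos(ωΔt) + 1), 4(cos(ωΔt)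 − 1)/(cos(ωΔt) + 1)) lies in the kernel of M, i.e. M applied to this vector is zero. -/
open Complex Matrix

/-- If the numerical dispersion relation `cos(βℓ)(D₂ + F₁i) = D₁ + F₁i` holds
and `cos(ωΔt) ≠ −1`, then the vector
`(1, −2i·sin(ωΔt)/(cos(ωΔt)+1), 4(cos(ωΔt)−1)/(cos(ωΔt)+1))` lies in the
kernel of the coefficient matrix `M` of the fully-discrete system. -/
theorem discrete_system_eigenvector
    (ω Δt ψ₁ ψ₂ M₁ M₂ ℓ : ℝ) (hℓ : 0 < ℓ) (hcos : Real.cos (ω * Δt) ≠ -1) (β : ℂ)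
    (hdisp :
      Complex.cos (β * ℓ)
          * (((-(Real.cos (ω * Δt) + 1) / 4 + ψ₁ * M₂ * (Real.cos (ω * Δt) - 1) : ℝ) : ℂ)
              + ((ψ₂ * Real.sin (ω * Δt) / 2 : ℝ) : ℂ) * I)
        = ((-((Real.cos (ω * Δt) + 1) / 4 + ψ₁ * M₁ * (Real.cos (ω * Δt) - 1)) : ℝ) : ℂ)
            + ((ψ₂ * Real.sin (ω * Δt) / 2 : ℝ) : ℂ) * I) :
    let M : Matrix (Fin 3) (Fin 3) ℂ :=
      Matrix.of
        ![![1 - Complex.cos (β * ℓ), (ψ₂ : ℂ) * (1 - Complex.cos (β * ℓ)),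
            (ψ₁ : ℂ) * ((M₂ : ℂ) * Complex.cos (β * ℓ) + (M₁ : ℂ))],
          ![0, (Real.cos (ω * Δt) : ℂ) - 1, (I / 2) * (Real.sin (ω * Δt) : ℂ)],
          ![(Real.cos (ω * Δt) : ℂ) - 1, 0, -((Real.cos (ω * Δt) : ℂ) + 1) / 4]]
    M.mulVec
        ![1, -2 * I * (Real.sin (ω * Δt) : ℂ) / ((Real.cos (ω * Δt) : ℂ) + 1),
          4 * ((Real.cos (ω * Δt) : ℂ) - 1) / ((Real.cos (ω * Δt) : ℂ) + 1)]
      = 0 := by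
  intro M
  have hne : ((Real.cos (ω * Δt) : ℂ) + 1) ≠ 0 := by
    intro h
    apply hcos
    have h2 : ((Real.cos (ω * Δt) : ℂ)) = -1 := by linear_combination h
    have h3 : ((Real.cos (ω * Δt) : ℝ)) = -1 := by exact_mod_cast h2
    exact h3
  push_cast at hdisp hne
  funext j
  fin_cases j <;>
    simp only [M, Matrix.mulVec, Matrix.of_apply, dotProduct, Fin.sum_univ_three,
      Matrix.cons_val_zero, Matrix.cons_val_one, Matrix.head_cons, Matrix.cons_val_two,
      Matrix.tail_cons, Pi.zero_apply] <;>
    push_cast <;>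
    field_simp
  · linear_combination (4 : ℂ) * hdisp
  · ring
  · ring
end

section
/- Let ω, Δt, ℓ, ψ₁, ψ₂, M₁, M₂ be real with Δt > 0, ℓ > 0 and cos(ωΔt) ≠ −1, and let β ∈ ℂ. For j, k ∈ ℤ define u_{j,k} = exp(i(βjℓ − ωkΔt)), V_{j,k} = (−2i·sin(ωΔt)/(cos(ωΔt)+1))·u_{j,k}, and W_{j,k} = (4(cos(ωΔt)−1)/(cos(ωΔt)+1))·u_{j,k}. Then the discrete nodal equilibrium equation (−u_{j−1,k} + 2u_{j,k} − u_{j+1,k}) + ψ₂(−V_{j−1,k} + 2V_{j,k} − V_{j+1,k}) + ψ₁(M₂W_{j−1,k} + 2M₁W_{j,k} + M₂W_{j+1,k}) = 0 holds for all j, k ∈ ℤ if and only if cos(βℓ)·(D₂ + F₁·i) = D₁ + F₁·i, where D₁ = −((cos(ωΔt)+1)/4 + ψ₁M₁(cos(ωΔt)−1)), D₂ = −(cos(ωΔt)+1)/4 + ψ₁M₂(cos(ωΔt)−1), F₁ = ψ₂·sin(ωΔt)/2. -/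
open Complex

set_option maxHeartbeats 2000000 in
/-- Dispersion theorem for the fully discrete viscoelastic wave: with the
discrete plane-wave ansatz `u_{j,k} = e^{i(βjℓ − ωkΔt)}` and the Newmark
eigen-vector scalings `V_{j,k} = (−2i·sin(ωΔt)/(cos(ωΔt)+1))·u_{j,k}`,
`W_{j,k} = (4(cos(ωΔt)−1)/(cos(ωΔt)+1))·u_{j,k}`, the discrete nodal
equilibrium equation holds for all `j, k ∈ ℤ` if and only if
`cos(βℓ)(D₂ + F₁i) = D₁ + F₁i`. -/
theorem discrete_nodal_equilibrium_iff_dispersion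
    (ω Δt ℓ ψ₁ ψ₂ M₁ M₂ : ℝ) (hΔt : 0 < Δt) (hℓ : 0 < ℓ)
    (hcos : Real.cos (ω * Δt) ≠ -1) (β : ℂ)
    (u V W : ℤ → ℤ → ℂ)
    (hu : ∀ j k : ℤ, u j k = Complex.exp (I * (β * j * ℓ - ω * k * Δt)))
    (hV : ∀ j k : ℤ, V j k
      = (-2 * I * (Real.sin (ω * Δt) : ℂ) / ((Real.cos (ω * Δt) : ℂ) + 1)) * u j k)
    (hW : ∀ j k : ℤ, W j k
      = (4 * ((Real.cos (ω * Δt) : ℂ) - 1) / ((Real.cos (ω * Δt) : ℂ) + 1)) * u j k) :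
    (∀ j k : ℤ,
        (-u (j - 1) k + 2 * u j k - u (j + 1) k)
          + (ψ₂ : ℂ) * (-V (j - 1) k + 2 * V j k - V (j + 1) k)
          + (ψ₁ : ℂ) * ((M₂ : ℂ) * W (j - 1) k + 2 * (M₁ : ℂ) * W j k
              + (M₂ : ℂ) * W (j + 1) k) = 0)
      ↔
    Complex.cos (β * ℓ)
        * (((-(Real.cos (ω * Δt) + 1) / 4 + ψ₁ * M₂ * (Real.cos (ω * Δt) - 1) : ℝ) : ℂ)
            + ((ψ₂ * Real.sin (ω * Δt) / 2 : ℝ) : ℂ) * I)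
      = ((-((Real.cos (ω * Δt) + 1) / 4 + ψ₁ * M₁ * (Real.cos (ω * Δt) - 1)) : ℝ) : ℂ)
          + ((ψ₂ * Real.sin (ω * Δt) / 2 : ℝ) : ℂ) * I := by

  have hc1 : (Real.cos (ω * Δt) : ℂ) + 1 ≠ 0 := by
    intro h
    apply hcos
    have h2 : ((Real.cos (ω * Δt)) : ℂ) = -1 := by linear_combination h
    exact_mod_cast h2
  have hiff : ∀ j k : ℤ,
      ((-u (j - 1) k + 2 * u j k - u (j + 1) k)
          + (ψ₂ : ℂ) * (-V (j - 1) k + 2 * V j k - V (j + 1) k)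
          + (ψ₁ : ℂ) * ((M₂ : ℂ) * W (j - 1) k + 2 * (M₁ : ℂ) * W j k
              + (M₂ : ℂ) * W (j + 1) k) = 0)
      ↔ Complex.cos (β * ℓ)
        * (((-(Real.cos (ω * Δt) + 1) / 4 + ψ₁ * M₂ * (Real.cos (ω * Δt) - 1) : ℝ) : ℂ)
            + ((ψ₂ * Real.sin (ω * Δt) / 2 : ℝ) : ℂ) * I)
      = ((-((Real.cos (ω * Δt) + 1) / 4 + ψ₁ * M₁ * (Real.cos (ω * Δt) - 1)) : ℝ) : ℂ)
          + ((ψ₂ * Real.sin (ω * Δt) / 2 : ℝ) : ℂ) * I := by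
    intro j k
    set p : ℂ := Complex.exp (I * (β * ℓ)) with hp
    have hpne : p ≠ 0 := Complex.exp_ne_zero _
    have hune : u j k ≠ 0 := by rw [hu]; exact Complex.exp_ne_zero _
    have hplus : u (j + 1) k = u j k * p := by
      rw [hu, hu, hp, ← Complex.exp_add]
      congr 1
      push_cast
      ring
    have hminus : u (j - 1) k = u j k * p⁻¹ := by
      rw [hu, hu, hp, ← Complex.exp_neg, ← Complex.exp_add]
      congr 1
      push_cast
      ring
    have hcosβ : Complex.cos (β * ℓ) = (p + p⁻¹) / 2 := by
      rw [Complex.cos, hp, ← Complex.exp_neg]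
      ring_nf
    have main :
        ((-u (j - 1) k + 2 * u j k - u (j + 1) k)
          + (ψ₂ : ℂ) * (-V (j - 1) k + 2 * V j k - V (j + 1) k)
          + (ψ₁ : ℂ) * ((M₂ : ℂ) * W (j - 1) k + 2 * (M₁ : ℂ) * W j k
              + (M₂ : ℂ) * W (j + 1) k)) * (((Real.cos (ω * Δt) : ℂ) + 1) * p)
        = (u j k * (8 * p))
            * (Complex.cos (β * ℓ)
        * (((-(Real.cos (ω * Δt) + 1) / 4 + ψ₁ * M₂ * (Real.cos (ω * Δt) - 1) : ℝ) : ℂ)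
            + ((ψ₂ * Real.sin (ω * Δt) / 2 : ℝ) : ℂ) * I)
      - (((-((Real.cos (ω * Δt) + 1) / 4 + ψ₁ * M₁ * (Real.cos (ω * Δt) - 1)) : ℝ) : ℂ)
          + ((ψ₂ * Real.sin (ω * Δt) / 2 : ℝ) : ℂ) * I)) := by
      have hc2 : Complex.cos ((ω : ℂ) * (Δt : ℂ)) + 1 ≠ 0 := by
        rw [show ((ω : ℂ) * (Δt : ℂ)) = ((ω * Δt : ℝ) : ℂ) by push_cast; ring,
          ← Complex.ofReal_cos]
        exact hc1
      have hd : (Complex.cos ((ω : ℂ) * (Δt : ℂ)) + 1)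
          * (Complex.cos ((ω : ℂ) * (Δt : ℂ)) + 1)⁻¹ = 1 := mul_inv_cancel₀ hc2
      rw [hV, hV, hV, hW, hW, hW, hplus, hminus, hcosβ]
      push_cast
      linear_combination (u j k * p
        * ((-2) * I * Complex.sin ((ω : ℂ) * (Δt : ℂ)) * (ψ₂ : ℂ)
              * (-(p⁻¹) + 2 - p)
            + 4 * (ψ₁ : ℂ) * (Complex.cos ((ω : ℂ) * (Δt : ℂ)) - 1)
              * ((M₂ : ℂ) * p⁻¹ + 2 * (M₁ : ℂ) + (M₂ : ℂ) * p))) * hd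
    have h8 : u j k * (8 * p) ≠ 0 := by
      apply mul_ne_zero hune
      exact mul_ne_zero (by norm_num) hpne
    have hcp : (((Real.cos (ω * Δt) : ℂ) + 1) * p) ≠ 0 := mul_ne_zero hc1 hpne
    constructor
    · intro h
      rw [h, zero_mul] at main
      have h0 := (mul_eq_zero.mp main.symm).resolve_left h8
      exact sub_eq_zero.mp h0
    · intro h
      have h0 : u j k * (8 * p) * (Complex.cos (β * ℓ)
        * (((-(Real.cos (ω * Δt) + 1) / 4 + ψ₁ * M₂ * (Real.cos (ω * Δt) - 1) : ℝ) : ℂ)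
            + ((ψ₂ * Real.sin (ω * Δt) / 2 : ℝ) : ℂ) * I)
      - (((-((Real.cos (ω * Δt) + 1) / 4 + ψ₁ * M₁ * (Real.cos (ω * Δt) - 1)) : ℝ) : ℂ)
          + ((ψ₂ * Real.sin (ω * Δt) / 2 : ℝ) : ℂ) * I)) = 0 := by
        rw [sub_eq_zero.mpr h, mul_zero]
      rw [h0] at main
      exact (mul_eq_zero.mp main).resolve_right hcp
  constructor
  · intro h
    exact (hiff 0 0).mp (h 0 0)
  · intro h j k
    exact (hiff j k).mpr h
end

section
/- Let d, h, D, F be real numbers such that the complex cosine satisfies cos(d + h·i) = D + F·i. Then cosh²(h) = (1 + D² + F² + √((1 + D² + F²)² − 4D²))/2 and cos²(d) = (1 + D² + F² − √((1 + D² + F²)² − 4D²))/2. -/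
open Complex

/-- If the complex cosine satisfies `cos(d + hi) = D + Fi` for real `d, h, D, F`,
then `cosh²h` is the larger and `cos²d` the smaller root of the quadratic
`t² − (1 + D² + F²)t + D² = 0`. -/
theorem complex_cos_dispersion_roots
    (d h D F : ℝ)
    (hc : Complex.cos ((d : ℂ) + (h : ℂ) * I) = (D : ℂ) + (F : ℂ) * I) :
    Real.cosh h ^ 2
        = (1 + D ^ 2 + F ^ 2 + Real.sqrt ((1 + D ^ 2 + F ^ 2) ^ 2 - 4 * D ^ 2)) / 2
    ∧ Real.cos d ^ 2
        = (1 + D ^ 2 + F ^ 2 - Real.sqrt ((1 + D ^ 2 + F ^ 2) ^ 2 - 4 * D ^ 2)) / 2 := by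
  rw [Complex.cos_add_mul_I] at hc
  have hre := congrArg Complex.re hc
  have him := congrArg Complex.im hc
  simp [Complex.cos_ofReal_re, Complex.ext_iff] at hre him
  -- hre : cos d * cosh h = D, him : -(sin d * sinh h) = F (check shapes)
  have hD : Real.cos d * Real.cosh h = D := by
    simpa [← Complex.ofReal_cos, ← Complex.ofReal_cosh, ← Complex.ofReal_sin,
      ← Complex.ofReal_sinh] using hre
  have hF : -(Real.sin d * Real.sinh h) = F := by
    simpa [← Complex.ofReal_cos, ← Complex.ofReal_cosh, ← Complex.ofReal_sin,
      ← Complex.ofReal_sinh] using him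
  have hs2 : Real.sin d ^ 2 = 1 - Real.cos d ^ 2 := by
    nlinarith [Real.sin_sq_add_cos_sq d]
  have hh2 : Real.sinh h ^ 2 = Real.cosh h ^ 2 - 1 := by
    nlinarith [Real.cosh_sq_sub_sinh_sq h]
  have e1 : D ^ 2 = Real.cos d ^ 2 * Real.cosh h ^ 2 := by rw [← hD]; ring
  have e2 : F ^ 2 = Real.sin d ^ 2 * Real.sinh h ^ 2 := by rw [← hF]; ring
  have hsum : 1 + D ^ 2 + F ^ 2 = Real.cos d ^ 2 + Real.cosh h ^ 2 := by
    rw [e1, e2, hs2, hh2]; ring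
  have hle : Real.cos d ^ 2 ≤ Real.cosh h ^ 2 := by
    nlinarith [Real.neg_one_le_cos d, Real.cos_le_one d, Real.one_le_cosh h]
  have hsqrt : Real.sqrt ((1 + D ^ 2 + F ^ 2) ^ 2 - 4 * D ^ 2)
      = Real.cosh h ^ 2 - Real.cos d ^ 2 := by
    have : (1 + D ^ 2 + F ^ 2) ^ 2 - 4 * D ^ 2
        = (Real.cosh h ^ 2 - Real.cos d ^ 2) ^ 2 := by
      rw [hsum, e1]; ring
    rw [this, Real.sqrt_sq (by linarith)]
  constructor <;> rw [hsqrt] <;> linarith [hsum]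
end
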